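/- Let d ≥ 1 and H := ℝ^{d−1} × [0, ∞). Let g : H → ℝ be Lipschitz with Lipschitz constant K and compact support, and define its even reflection g_r : ℝ^d → ℝ by g_r(x′, t) := g(x′, |t|). Then: (i) g_r is Lipschitz with constant K and has compact support; (ii) ∫_{ℝ^d} g_r(x)² dx = 2 ∫_H g(x)² dx; (iii) ∫_{ℝ^d} ‖∇g_r(x)‖² dx = 2 ∫_{int H} ‖∇g(x)‖² dx, where ∇ denotes the almost everywhere defined Fréchet derivative (Rademacher's theorem) and integrals are with respect to Lebesgue measure. -/

import Mathlib

open MeasureTheory Metric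

noncomputable def myRefl (d : ℕ) (i : Fin d) :
    EuclideanSpace ℝ (Fin d) ≃ₗᵢ[ℝ] EuclideanSpace ℝ (Fin d) :=
  LinearIsometryEquiv.piLpCongrRight 2
    (fun j => if j = i then LinearIsometryEquiv.neg ℝ else LinearIsometryEquiv.refl ℝ ℝ)

lemma myRefl_apply (d : ℕ) (i : Fin d) (x : EuclideanSpace ℝ (Fin d)) :
    myRefl d i x = WithLp.toLp 2 (Function.update (WithLp.ofLp x) i (-(x i))) := by
  ext j
  simp [myRefl, LinearIsometryEquiv.piLpCongrRight_apply, Function.update]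
  split_ifs with h
  · subst h; simp
  · simp [h]

lemma norm_fderiv_symm {E : Type*} [NormedAddCommGroup E] [NormedSpace ℝ E]
    (f : E → ℝ) (e : E ≃ₗᵢ[ℝ] E) (hf : ∀ x, f (e x) = f x) (x : E) :
    ‖fderiv ℝ f (e x)‖ = ‖fderiv ℝ f x‖ := by
  have hfc : f ∘ e = f := funext hf
  by_cases h : DifferentiableAt ℝ f (e x)
  · have hde : DifferentiableAt ℝ (e : E → E) x := e.toContinuousLinearEquiv.differentiableAt
    have hcomp : fderiv ℝ (f ∘ e) x = (fderiv ℝ f (e x)).comp (fderiv ℝ (e : E → E) x) :=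
      fderiv_comp x h hde
    rw [hfc] at hcomp
    have hfe : fderiv ℝ (e : E → E) x = (e.toContinuousLinearEquiv : E →L[ℝ] E) :=
      e.toContinuousLinearEquiv.fderiv
    rw [hcomp, hfe]
    exact (ContinuousLinearMap.opNorm_comp_linearIsometryEquiv (fderiv ℝ f (e x)) e).symm
  · have h2 : ¬ DifferentiableAt ℝ f x := by
      intro hx
      apply h
      have heq : f = f ∘ e.symm := by
        funext y
        have := hf (e.symm y)
        simp only [LinearIsometryEquiv.apply_symm_apply] at this
        simp [Function.comp, ← this]
      have : DifferentiableAt ℝ (f ∘ (e.symm : E → E)) (e x) := by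
        apply DifferentiableAt.comp
        · simpa using hx
        · exact e.symm.toContinuousLinearEquiv.differentiableAt
      rw [heq]; exact this
    rw [fderiv_zero_of_not_differentiableAt h, fderiv_zero_of_not_differentiableAt h2]

/-- **Even reflection across the boundary hyperplane of the upper half-space.**
Let `H = ℝ^{d-1} × [0,∞)` (the set where the last coordinate is nonnegative), let
`g : H → ℝ` be `K`-Lipschitz with compact support, and let `g_r` be its even reflection,
`g_r(x', t) = g(x', |t|)`.  Then (i) `g_r` is `K`-Lipschitz with compact support,
(ii) `∫_{ℝ^d} g_r² = 2 ∫_H g²`, and (iii) `∫_{ℝ^d} ‖∇g_r‖² = 2 ∫_{int H} ‖∇g‖²`,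
where `∇` is the a.e.-defined Fréchet derivative. -/
theorem even_reflection_lipschitz_and_integrals (d : ℕ) (hd : 1 ≤ d)
    (i : Fin d) (hi : (i : ℕ) = d - 1)
    (H : Set (EuclideanSpace ℝ (Fin d)))
    (hH : H = {x : EuclideanSpace ℝ (Fin d) | 0 ≤ x i})
    (g : EuclideanSpace ℝ (Fin d) → ℝ) (K : NNReal) (hg : LipschitzOnWith K g H)
    (hsupp : IsCompact (closure {x ∈ H | g x ≠ 0}))
    (g_r : EuclideanSpace ℝ (Fin d) → ℝ)
    (hg_r : g_r = fun x => g (WithLp.toLp 2 (Function.update (WithLp.ofLp x) i |x i|))) :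
    (LipschitzWith K g_r ∧ HasCompactSupport g_r) ∧
      (∫ x, (g_r x) ^ 2) = 2 * ∫ x in H, (g x) ^ 2 ∧
      (∫ x, ‖fderiv ℝ g_r x‖ ^ 2) = 2 * ∫ x in interior H, ‖fderiv ℝ g x‖ ^ 2 := by
  classical
  set e : EuclideanSpace ℝ (Fin d) ≃ₗᵢ[ℝ] EuclideanSpace ℝ (Fin d) := myRefl d i with he
  have he_apply : ∀ x, e x = WithLp.toLp 2 (Function.update (WithLp.ofLp x) i (-(x i))) := myRefl_apply d i
  have he_i : ∀ x, e x i = -(x i) := by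
    intro x; rw [he_apply]; simp
  set R : EuclideanSpace ℝ (Fin d) → EuclideanSpace ℝ (Fin d) :=
    fun x => WithLp.toLp 2 (Function.update (WithLp.ofLp x) i |x i|) with hRdef
  have hRH : ∀ x, R x ∈ H := by
    intro x; rw [hH]; simp [hRdef, abs_nonneg]
  have hRdist : ∀ x y, dist (R x) (R y) ≤ dist x y := by
    intro x y
    rw [EuclideanSpace.dist_eq, EuclideanSpace.dist_eq]
    apply Real.sqrt_le_sqrt
    apply Finset.sum_le_sum
    intro j _
    rcases eq_or_ne j i with rfl | hj
    · simp only [hRdef, Function.update_self, Real.dist_eq]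
      exact pow_le_pow_left₀ (abs_nonneg _) (abs_abs_sub_abs_le_abs_sub _ _) 2
    · simp [hRdef, Function.update_of_ne hj]
  have hgr_eq : ∀ x ∈ H, g_r x = g x := by
    intro x hx
    rw [hH] at hx
    rw [hg_r]
    simp only
    rw [abs_of_nonneg hx, Function.update_eq_self]
  have hgr_even : ∀ x, g_r (e x) = g_r x := by
    intro x
    rw [hg_r, he_apply]
    simp only
    rw [Function.update_idem]
    congr 1
    simp [Function.update_self, abs_neg]
  have hlip : LipschitzWith K g_r := by
    intro x y
    rw [hg_r]
    calc edist (g (WithLp.toLp 2 (Function.update (WithLp.ofLp x) i |x i|))) (g (WithLp.toLp 2 (Function.update (WithLp.ofLp y) i |y i|)))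
        ≤ K * edist (R x) (R y) := hg (hRH x) (hRH y)
      _ ≤ K * edist x y := by
          gcongr
          rw [edist_dist, edist_dist]
          exact ENNReal.ofReal_le_ofReal (hRdist x y)
  have hsupp_r : HasCompactSupport g_r := by
    have hsub : Function.support g_r ⊆
        closure {x ∈ H | g x ≠ 0} ∪ (e '' closure {x ∈ H | g x ≠ 0}) := by
      intro x hx
      have hgx : g (R x) ≠ 0 := by
        rw [hg_r] at hx; exact hx
      rcases le_or_gt 0 (x i) with h0 | h0
      · left
        apply subset_closure
        have hRx : R x = x := by
          rw [hRdef]; simp only; rw [abs_of_nonneg h0, Function.update_eq_self]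
        rw [hRx] at hgx
        exact ⟨by rw [hH]; exact h0, hgx⟩
      · right
        refine ⟨R x, subset_closure ⟨hRH x, hgx⟩, ?_⟩
        rw [he_apply, hRdef]
        ext j
        rcases eq_or_ne j i with rfl | hj
        · simp [abs_of_neg h0]
        · simp [Function.update_of_ne hj]
    have hC : IsCompact (closure {x ∈ H | g x ≠ 0} ∪ e '' closure {x ∈ H | g x ≠ 0}) :=
      hsupp.union (hsupp.image e.continuous)
    exact HasCompactSupport.of_support_subset_isCompact hC hsub
  -- measurability / null sets
  have hconti : Continuous fun x : EuclideanSpace ℝ (Fin d) => x i :=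
    (EuclideanSpace.proj i (𝕜 := ℝ)).continuous
  have hHmeas : MeasurableSet H := by
    rw [hH]; exact (isClosed_le continuous_const hconti).measurableSet
  have hHc : Hᶜ = {x : EuclideanSpace ℝ (Fin d) | x i < 0} := by
    rw [hH]; ext x; simp [not_le]
  have hnull : volume {x : EuclideanSpace ℝ (Fin d) | x i = 0} = 0 := by
    have hker : {x : EuclideanSpace ℝ (Fin d) | x i = 0} =
        (LinearMap.ker (EuclideanSpace.projₗ i (𝕜 := ℝ)) : Set _) := by
      ext x; simp [LinearMap.mem_ker]
    rw [hker]
    apply Measure.addHaar_submodule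
    intro htop
    have h1 : EuclideanSpace.single i (1:ℝ) ∈
        LinearMap.ker (EuclideanSpace.projₗ i (𝕜 := ℝ)) := by
      rw [htop]; trivial
    rw [LinearMap.mem_ker] at h1
    simp [EuclideanSpace.projₗ, EuclideanSpace.single_apply] at h1
  have haeq : {x : EuclideanSpace ℝ (Fin d) | 0 < x i} =ᵐ[volume] H := by
    rw [hH, ae_eq_set]
    constructor
    · refine measure_mono_null (fun x hx => ?_) (measure_empty (μ := volume))
      simp only [Set.mem_diff, Set.mem_setOf_eq] at hx
      exact absurd (le_of_lt hx.1) hx.2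
    · refine measure_mono_null (fun x hx => ?_) hnull
      simp only [Set.mem_diff, Set.mem_setOf_eq] at hx ⊢
      exact le_antisymm (not_lt.1 hx.2) hx.1
  have hintH : interior H = {x : EuclideanSpace ℝ (Fin d) | 0 < x i} := by
    rw [hH]
    apply subset_antisymm
    · intro x hx
      rcases Metric.mem_nhds_iff.1 (mem_interior_iff_mem_nhds.1 hx) with ⟨ε, hε, hball⟩
      simp only [Set.mem_setOf_eq]
      by_contra hc
      push_neg at hc
      have hmem : x - (ε/2) • EuclideanSpace.single i (1:ℝ) ∈ Metric.ball x ε := by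
        rw [Metric.mem_ball, dist_eq_norm]
        have : x - (ε/2) • EuclideanSpace.single i (1:ℝ) - x
            = -((ε/2) • EuclideanSpace.single i (1:ℝ)) := by abel
        rw [this, norm_neg, norm_smul, EuclideanSpace.norm_single]
        rw [norm_one, mul_one, Real.norm_eq_abs, abs_of_pos (half_pos hε)]
        linarith
      have := hball hmem
      simp only [Set.mem_setOf_eq] at this
      have hxi : (x - (ε/2) • EuclideanSpace.single i (1:ℝ)) i = x i - ε/2 := by
        simp [EuclideanSpace.single_apply]
      rw [hxi] at this
      linarith
    · apply interior_maximal
      · intro x hx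
        simp only [Set.mem_setOf_eq] at hx ⊢
        exact le_of_lt hx
      · exact isOpen_lt continuous_const hconti
  -- key integral identity
  have key : ∀ F : EuclideanSpace ℝ (Fin d) → ℝ, Integrable F → (∀ x, F (e x) = F x) →
      ∫ x, F x = 2 * ∫ x in {x : EuclideanSpace ℝ (Fin d) | 0 < x i}, F x := by
    intro F hF hFe
    have hmp : MeasurePreserving (e : EuclideanSpace ℝ (Fin d) → EuclideanSpace ℝ (Fin d))
        volume volume := e.measurePreserving
    have hemb : MeasurableEmbedding (e : EuclideanSpace ℝ (Fin d) → EuclideanSpace ℝ (Fin d)) :=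
      e.toHomeomorph.measurableEmbedding
    have hpre : (e : EuclideanSpace ℝ (Fin d) → EuclideanSpace ℝ (Fin d)) ⁻¹'
        {x : EuclideanSpace ℝ (Fin d) | 0 < x i} = Hᶜ := by
      ext x
      simp only [Set.mem_preimage, Set.mem_setOf_eq, hHc, he_i, neg_pos]
    have h1 : ∫ x in Hᶜ, F x = ∫ x in {x : EuclideanSpace ℝ (Fin d) | 0 < x i}, F x := by
      rw [← hmp.setIntegral_preimage_emb hemb F {x : EuclideanSpace ℝ (Fin d) | 0 < x i},
        hpre]
      exact setIntegral_congr_fun hHmeas.compl (fun x _ => (hFe x).symm)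
    have h2 : ∫ x in H, F x = ∫ x in {x : EuclideanSpace ℝ (Fin d) | 0 < x i}, F x :=
      (setIntegral_congr_set haeq).symm
    rw [← integral_add_compl hHmeas hF, h1, h2]
    ring
  -- part (ii)
  have hgr_cont : Continuous g_r := hlip.continuous
  have hint2 : Integrable (fun x => (g_r x)^2) := by
    apply Continuous.integrable_of_hasCompactSupport (hgr_cont.pow 2)
    have h0 : HasCompactSupport ((fun y : ℝ => y^2) ∘ g_r) := hsupp_r.comp_left (by simp)
    exact h0
  have part2 : (∫ x, (g_r x)^2) = 2 * ∫ x in H, (g x)^2 := by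
    rw [key _ hint2 (fun x => by rw [hgr_even])]
    congr 1
    rw [setIntegral_congr_set haeq]
    exact setIntegral_congr_fun hHmeas (fun x hx => by rw [hgr_eq x hx])
  -- part (iii)
  have hsym : ∀ x, ‖fderiv ℝ g_r (e x)‖ = ‖fderiv ℝ g_r x‖ :=
    norm_fderiv_symm g_r e hgr_even
  have hfd_supp : HasCompactSupport (fderiv ℝ g_r) := hsupp_r.fderiv (𝕜 := ℝ)
  have hint3 : Integrable (fun x => ‖fderiv ℝ g_r x‖^2) := by
    have hsupp3 : HasCompactSupport (fun x => ‖fderiv ℝ g_r x‖^2) :=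
      hfd_supp.comp_left (g := fun y => ‖y‖^2) (by simp)
    apply Integrable.mono' (g := (tsupport (fun x => ‖fderiv ℝ g_r x‖^2)).indicator
      (fun _ => ((K:ℝ))^2))
    · rw [integrable_indicator_iff hsupp3.isClosed.measurableSet]
      exact integrableOn_const hsupp3.measure_lt_top.ne
    · exact ((measurable_fderiv ℝ g_r).norm.pow_const 2).aestronglyMeasurable
    · apply Filter.Eventually.of_forall
      intro x
      by_cases hx : x ∈ tsupport (fun x => ‖fderiv ℝ g_r x‖^2)
      · rw [Set.indicator_of_mem hx]
        rw [Real.norm_eq_abs, abs_of_nonneg (by positivity)]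
        exact pow_le_pow_left₀ (norm_nonneg _) (norm_fderiv_le_of_lipschitz ℝ hlip) 2
      · rw [Set.indicator_of_notMem hx, image_eq_zero_of_notMem_tsupport hx]
        simp
  have hfd_eq : ∀ x ∈ interior H, fderiv ℝ g x = fderiv ℝ g_r x := by
    intro x hx
    apply Filter.EventuallyEq.fderiv_eq
    filter_upwards [isOpen_interior.mem_nhds hx] with y hy
    exact (hgr_eq y (interior_subset hy)).symm
  have part3 : (∫ x, ‖fderiv ℝ g_r x‖^2) = 2 * ∫ x in interior H, ‖fderiv ℝ g x‖^2 := by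
    rw [key _ hint3 (fun x => by rw [hsym x]), ← hintH]
    congr 1
    exact setIntegral_congr_fun isOpen_interior.measurableSet
      (fun x hx => by rw [hfd_eq x hx])
  exact ⟨⟨hlip, hsupp_r⟩, part2, part3⟩
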